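/- Let $T$ be a real symmetric positive definite $n \times n$ matrix and $D$ a real diagonal $n \times n$ matrix. For $1 \le m \le n$, let $d_m$ denote the $m$-th leading principal minor determinant of the complex matrix $T + \sqrt{-1}\, D$. Then for every $m = 1, 2, \dots, n-1$, the real part of $d_{m+1} \overline{d_m}$ is strictly positive. -/

import Mathlib

open Matrix

private lemma sum_castLE {n m : ℕ} (hm : m ≤ n) (f : Fin n → ℝ)
    (hf : ∀ i : Fin n, ¬ (i : ℕ) < m → f i = 0) :
    ∑ i, f i = ∑ j : Fin m, f (Fin.castLE hm j) := by
  classical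
  have h1 : ∑ j : Fin m, f (Fin.castLE hm j) = ∑ i ∈ Finset.univ.map (Fin.castLEEmb hm), f i := by
    rw [Finset.sum_map]
    rfl
  rw [h1]
  refine (Finset.sum_subset (Finset.subset_univ _) ?_).symm
  intro i _ hi
  refine hf i fun hlt => hi ?_
  simp only [Finset.mem_map, Finset.mem_univ, true_and]
  exact ⟨⟨(i : ℕ), hlt⟩, by ext; simp [Fin.castLEEmb]⟩

/-- Quadratic form of a submatrix along `castLE` equals the quadratic form of the
original matrix on the extension-by-zero vector. -/
private lemma quad_castLE {n m : ℕ} (hm : m ≤ n) (T : Matrix (Fin n) (Fin n) ℝ)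
    (x : Fin m → ℝ) :
    x ⬝ᵥ (T.submatrix (Fin.castLE hm) (Fin.castLE hm)) *ᵥ x =
      (fun i : Fin n => if h : (i : ℕ) < m then x ⟨i, h⟩ else 0) ⬝ᵥ
        T *ᵥ (fun i : Fin n => if h : (i : ℕ) < m then x ⟨i, h⟩ else 0) := by
  classical
  set y : Fin n → ℝ := fun i => if h : (i : ℕ) < m then x ⟨i, h⟩ else 0 with hy
  have hyc : ∀ j : Fin m, y (Fin.castLE hm j) = x j := by
    intro j; simp [hy]
  simp only [dotProduct, mulVec]
  rw [sum_castLE hm _ (fun i hi => by simp [hy, hi])]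
  refine Finset.sum_congr rfl fun j _ => ?_
  rw [hyc]
  congr 1
  rw [sum_castLE hm _ (fun i hi => by simp [hy, hi])]
  refine Finset.sum_congr rfl fun j' _ => ?_
  rw [hyc]
  simp

private lemma posdef_quad {n m : ℕ} (hm : m ≤ n) {T : Matrix (Fin n) (Fin n) ℝ}
    (hT : T.PosDef) (x : Fin m → ℝ) (hx : x ≠ 0) :
    0 < x ⬝ᵥ (T.submatrix (Fin.castLE hm) (Fin.castLE hm)) *ᵥ x := by
  rw [quad_castLE hm T x]
  set y : Fin n → ℝ := fun i => if h : (i : ℕ) < m then x ⟨i, h⟩ else 0 with hy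
  have hy0 : y ≠ 0 := by
    intro h
    apply hx
    funext j
    have := congrFun h (Fin.castLE hm j)
    simpa [hy] using this
  have := hT.dotProduct_mulVec_pos hy0
  simpa using this

private lemma posdef_quad_nonneg {n m : ℕ} (hm : m ≤ n) {T : Matrix (Fin n) (Fin n) ℝ}
    (hT : T.PosDef) (x : Fin m → ℝ) :
    0 ≤ x ⬝ᵥ (T.submatrix (Fin.castLE hm) (Fin.castLE hm)) *ᵥ x := by
  by_cases hx : x = 0
  · simp [hx]
  · exact le_of_lt (posdef_quad hm hT x hx)

/-- real part of a complexified real quadratic form -/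
private lemma re_quad {k : ℕ} (R : Matrix (Fin k) (Fin k) ℝ) (y : Fin k → ℂ) :
    (star y ⬝ᵥ (R.map (fun x => (x : ℂ))) *ᵥ y).re =
      (fun i => (y i).re) ⬝ᵥ R *ᵥ (fun i => (y i).re) +
      (fun i => (y i).im) ⬝ᵥ R *ᵥ (fun i => (y i).im) := by
  classical
  simp only [dotProduct, mulVec, map_apply, Pi.star_apply, Finset.mul_sum,
    Complex.re_sum, ← Finset.sum_add_distrib]
  refine Finset.sum_congr rfl fun i _ => ?_
  refine Finset.sum_congr rfl fun j _ => ?_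
  simp [Complex.mul_re, Complex.mul_im, RCLike.star_def, Complex.conj_re, Complex.conj_im]
  try ring

/-- imaginary part of complexified diagonal real quadratic form vanishes -/
private lemma im_quad_diag {k : ℕ} (Dm : Matrix (Fin k) (Fin k) ℝ)
    (hDm : ∀ i j : Fin k, i ≠ j → Dm i j = 0) (y : Fin k → ℂ) :
    (star y ⬝ᵥ (Dm.map (fun x => (x : ℂ))) *ᵥ y).im = 0 := by
  classical
  simp only [dotProduct, mulVec, map_apply, Pi.star_apply, Finset.mul_sum, Complex.im_sum]
  refine Finset.sum_eq_zero fun i _ => ?_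
  refine Finset.sum_eq_zero fun j _ => ?_
  by_cases h : i = j
  · subst h
    simp [Complex.mul_im, RCLike.star_def, Complex.conj_re, Complex.conj_im]
    try ring
  · simp [hDm i j h]

/-- For `T` real symmetric positive definite and `D` real diagonal, the leading
principal minors `dₘ` of `T + i D` satisfy `Re(dₘ₊₁ · conj dₘ) > 0`. -/
theorem stmt_1 (n : ℕ) (T D : Matrix (Fin n) (Fin n) ℝ)
    (hT : T.PosDef) (hD : ∀ i j : Fin n, i ≠ j → D i j = 0)
    (M : Matrix (Fin n) (Fin n) ℂ)
    (hM : M = T.map (fun x => (x : ℂ)) + Complex.I • D.map (fun x => (x : ℂ)))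
    (d : ∀ m : ℕ, m ≤ n → ℂ)
    (hd : ∀ (m : ℕ) (hm : m ≤ n),
      d m hm = (M.submatrix (Fin.castLE hm) (Fin.castLE hm)).det) :
    ∀ (m : ℕ) (hm : m + 1 ≤ n), 1 ≤ m →
      0 < (d (m + 1) hm * (starRingEnd ℂ) (d m ((Nat.le_succ m).trans hm))).re := by
  classical
  intro m hm _
  have hm' : m ≤ n := (Nat.le_succ m).trans hm
  set A : Matrix (Fin (m + 1)) (Fin (m + 1)) ℂ :=
    M.submatrix (Fin.castLE hm) (Fin.castLE hm) with hA
  -- key positivity of the Hermitian part of A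
  have hre : ∀ y : Fin (m + 1) → ℂ, y ≠ 0 → 0 < (star y ⬝ᵥ A *ᵥ y).re := by
    intro y hy
    have hAeq : A = (T.submatrix (Fin.castLE hm) (Fin.castLE hm)).map (fun x => (x : ℂ)) +
        Complex.I • (D.submatrix (Fin.castLE hm) (Fin.castLE hm)).map (fun x => (x : ℂ)) := by
      rw [hA, hM]
      ext i j
      simp [Matrix.submatrix, Matrix.map]
    have hsplit : star y ⬝ᵥ A *ᵥ y =
        star y ⬝ᵥ ((T.submatrix (Fin.castLE hm) (Fin.castLE hm)).map (fun x => (x : ℂ))) *ᵥ y +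
        Complex.I *
          (star y ⬝ᵥ ((D.submatrix (Fin.castLE hm) (Fin.castLE hm)).map (fun x => (x : ℂ))) *ᵥ y) := by
      rw [hAeq, add_mulVec, dotProduct_add, smul_mulVec, dotProduct_smul, smul_eq_mul]
    rw [hsplit]
    set u : Fin (m + 1) → ℝ := fun i => (y i).re with hu
    set v : Fin (m + 1) → ℝ := fun i => (y i).im with hv
    have hDsub : ∀ i j : Fin (m + 1), i ≠ j →
        (D.submatrix (Fin.castLE hm) (Fin.castLE hm)) i j = 0 := by
      intro i j hij
      exact hD _ _ (fun h => hij (Fin.castLE_injective hm h))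
    have him := im_quad_diag _ hDsub y
    have hre1 := re_quad (T.submatrix (Fin.castLE hm) (Fin.castLE hm)) y
    rw [Complex.add_re, Complex.mul_re, Complex.I_re, Complex.I_im, him]
    simp only [zero_mul, one_mul, mul_zero, sub_zero, zero_sub, neg_zero, add_zero]
    rw [hre1]
    -- now positivity of u T u + v T v
    have huv : u ≠ 0 ∨ v ≠ 0 := by
      by_contra h
      push_neg at h
      apply hy
      funext i
      have h1 := congrFun h.1 i
      have h2 := congrFun h.2 i
      exact Complex.ext (by simpa [hu] using h1) (by simpa [hv] using h2)
    rcases huv with h | h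
    · have := posdef_quad hm hT u h
      have h2 := posdef_quad_nonneg hm hT v
      linarith
    · have := posdef_quad hm hT v h
      have h2 := posdef_quad_nonneg hm hT u
      linarith
  -- A has nonzero determinant
  have hdet : A.det ≠ 0 := by
    intro h0
    obtain ⟨z, hz0, hz⟩ := (Matrix.exists_mulVec_eq_zero_iff.mpr h0)
    have := hre z hz0
    rw [hz] at this
    simp at this
  -- the adjugate column
  set y : Fin (m + 1) → ℂ := fun i => A.adjugate i (Fin.last m) with hy
  have hAy : A *ᵥ y = A.det • (Pi.single (Fin.last m) 1 : Fin (m + 1) → ℂ) := by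
    have := Matrix.mul_adjugate A
    funext i
    have h1 : (A * A.adjugate) i (Fin.last m) = (A.det • (1 : Matrix (Fin (m + 1)) (Fin (m + 1)) ℂ)) i (Fin.last m) := by
      rw [this]
    simp only [Matrix.mul_apply, Matrix.smul_apply, Matrix.one_apply, smul_eq_mul] at h1
    simp only [mulVec, dotProduct, hy]
    rw [h1]
    by_cases h : i = Fin.last m
    · subst h; simp
    · simp [h, Pi.single_eq_of_ne h]
  have hy0 : y ≠ 0 := by
    intro h
    rw [h] at hAy
    have := congrFun hAy (Fin.last m)
    simp [Matrix.mulVec_zero] at this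
    exact hdet this.symm
  -- value of the quadratic form
  have hquad : star y ⬝ᵥ A *ᵥ y = A.det * (starRingEnd ℂ) (y (Fin.last m)) := by
    rw [hAy]
    rw [dotProduct_smul]
    rw [dotProduct_single]
    simp [mul_comm]
  -- y at last is det of the smaller minor
  have hylast : y (Fin.last m) = (A.submatrix Fin.castSucc Fin.castSucc).det := by
    change A.adjugate (Fin.last m) (Fin.last m) = _
    rw [Matrix.adjugate_fin_succ_eq_det_submatrix]
    simp [Fin.succAbove_last, Fin.val_last, pow_add]
    rw [← pow_add, Even.neg_one_pow ⟨m, rfl⟩, one_mul]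
  -- relate to d
  have hdm1 : d (m + 1) hm = A.det := hd (m + 1) hm
  have hdm : d m hm' = (A.submatrix Fin.castSucc Fin.castSucc).det := by
    rw [hd m hm', hA, Matrix.submatrix_submatrix]
    have hfun : (Fin.castLE hm ∘ Fin.castSucc : Fin m → Fin n) = Fin.castLE hm' := by
      funext i; ext; simp
    rw [hfun]
  have := hre y hy0
  rw [hquad, hylast, ← hdm, ← hdm1] at this
  exact this
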